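/- Let X be a separable, complete Heine-Borel metric space (i.e., every closed bounded subset of X is compact), let (ν_n) be a sequence of finite Borel measures on X and ν a finite Borel measure on X. Then (ν_n) converges vaguely to ν if and only if lim_{n→∞} ν_n(A) = ν(A) for every bounded Borel set A ⊆ X with ν(∂A) = 0. -/

import Mathlib

open MeasureTheory Filter Topology
open Metric Set Bornology

theorem aux_rev {X : Type*} [MetricSpace X] [MeasurableSpace X] [BorelSpace X]
    (ν : ℕ → Measure X) (μ : Measure X)
    (hν : ∀ n, IsFiniteMeasure (ν n)) (hμ : IsFiniteMeasure μ)
    (h : ∀ A : Set X, MeasurableSet A → Bornology.IsBounded A → μ (frontier A) = 0 →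
        Tendsto (fun n => ν n A) atTop (𝓝 (μ A)))
    (g : X → ℝ) (hg : Continuous g) (hgc : HasCompactSupport g) (hg0 : ∀ x, 0 ≤ g x) :
    Tendsto (fun n => ∫ x, g x ∂(ν n)) atTop (𝓝 (∫ x, g x ∂μ)) := by
  classical
  set K := tsupport g with hK
  rcases K.eq_empty_or_nonempty with hKe | hKne
  · have hg' : ∀ x, g x = 0 := fun x =>
      image_eq_zero_of_notMem_tsupport (by rw [← hK, hKe]; exact notMem_empty x)
    simp only [hg', integral_zero]
    exact tendsto_const_nhds
  have hKc : IsCompact K := hgc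
  have hKb : IsBounded K := hKc.isBounded
  -- choose a good radius r
  have T0count : Set.Countable {t : ℝ | 0 < μ {x | infDist x K = t}} :=
    Measure.countable_meas_level_set_pos ((continuous_infDist_pt K).measurable)
  obtain ⟨r, hr01, hrT⟩ : ∃ r, r ∈ Ioo (0:ℝ) 1 ∧ r ∉ {t : ℝ | 0 < μ {x | infDist x K = t}} := by
    by_contra hcon
    push_neg at hcon
    have hsub : Ioo (0:ℝ) 1 ⊆ {t : ℝ | 0 < μ {x | infDist x K = t}} := fun t ht => hcon t ht
    have : volume (Ioo (0:ℝ) 1) = 0 :=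
      measure_mono_null hsub (T0count.measure_zero volume)
    simp [Real.volume_Ioo] at this
  set B := cthickening r K with hB
  have hBm : MeasurableSet B := isClosed_cthickening.measurableSet
  have hBb : IsBounded B := hKb.cthickening
  have hBf : μ (frontier B) = 0 := by
    have hsub : frontier B ⊆ {x | infDist x K = r} := by
      refine (frontier_cthickening_subset K).trans ?_
      intro x hx
      simp only [mem_setOf_eq] at hx ⊢
      rw [Metric.infDist, hx, ENNReal.toReal_ofReal hr01.1.le]
    refine measure_mono_null hsub ?_
    by_contra hpos
    exact hrT (pos_iff_ne_zero.mpr hpos)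
  have hBtendsto := h B hBm hBb hBf
  -- uniform bound C
  set C := ⨆ n, ν n B with hC
  have hCf : C ≠ ⊤ := by
    have hlt : μ B < μ B + 1 := ENNReal.lt_add_right (measure_ne_top μ B) one_ne_zero
    obtain ⟨N, hN⟩ := eventually_atTop.1 (hBtendsto.eventually_lt_const hlt)
    have : C ≤ ((Finset.range (N + 1)).sup fun i => ν i B) ⊔ (μ B + 1) := by
      refine iSup_le fun n => ?_
      rcases le_or_gt n N with hn | hn
      · exact le_sup_of_le_left
          (Finset.le_sup (f := fun i => ν i B) (Finset.mem_range.mpr (Nat.lt_succ_of_le hn)))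
      · exact le_sup_of_le_right (hN n hn.le).le
    have hfinsup : ((Finset.range (N + 1)).sup fun i => ν i B) < ⊤ :=
      Finset.sup_lt_iff (by simp) |>.mpr fun i _ => by
        haveI := hν i; exact measure_lt_top _ _
    exact (lt_of_le_of_lt this
      (sup_lt_iff.mpr ⟨hfinsup, ENNReal.add_lt_top.mpr ⟨measure_lt_top μ B, ENNReal.one_lt_top⟩⟩)).ne
  have hsubB : ∀ t : ℝ, 0 < t → {x | t < g x} ⊆ B := by
    intro t ht x hx
    refine self_subset_cthickening K (subset_tsupport g ?_)
    intro h0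
    simp only [mem_setOf_eq, h0] at hx
    exact absurd (ht.trans hx) (lt_irrefl 0)
  -- bound on g
  obtain ⟨M, hM⟩ := hg.bounded_above_of_compact_support hgc
  have hMg : ∀ x, g x ≤ M := fun x => (le_abs_self _).trans (by simpa [Real.norm_eq_abs] using hM x)
  -- countable bad level sets of g
  have Tcount : Set.Countable {t : ℝ | 0 < μ {x | g x = t}} :=
    Measure.countable_meas_level_set_pos hg.measurable
  have hptwise : ∀ t : ℝ, t ∈ Ioi (0:ℝ) → t ∉ {t : ℝ | 0 < μ {x | g x = t}} →
      Tendsto (fun n => ν n {x | t < g x}) atTop (𝓝 (μ {x | t < g x})) := by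
    intro t ht hTt
    have hopen : IsOpen {x | t < g x} := isOpen_lt continuous_const hg
    refine h _ hopen.measurableSet ((hBb.subset (hsubB t ht))) ?_
    have hfr : frontier {x | t < g x} ⊆ {x | g x = t} := by
      refine (frontier_lt_subset_eq continuous_const hg).trans ?_
      intro x hx; exact (mem_setOf_eq ▸ hx).symm
    refine measure_mono_null hfr ?_
    by_contra hpos
    exact hTt (pos_iff_ne_zero.mpr hpos)
  -- dominated convergence
  have hFmeas : ∀ n, Measurable fun t : ℝ => ν n {x | t < g x} := by
    intro n
    exact Antitone.measurable fun s t hst => measure_mono fun x hx => lt_of_le_of_lt hst hx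
  have hbound : ∀ n, (fun t : ℝ => ν n {x | t < g x}) ≤ᵐ[volume.restrict (Ioi 0)]
      fun t => (Ioc (0:ℝ) M).indicator (fun _ => C) t := by
    intro n
    filter_upwards [self_mem_ae_restrict measurableSet_Ioi] with t ht
    rcases le_or_gt t M with htM | htM
    · rw [indicator_of_mem (Set.mem_Ioc.mpr ⟨ht, htM⟩)]
      exact le_trans (measure_mono (hsubB t ht)) (le_iSup (fun n => ν n B) n)
    · have hempty : {x | t < g x} = ∅ := by
        ext x; simp only [mem_setOf_eq, mem_empty_iff_false, iff_false, not_lt]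
        exact (hMg x).trans htM.le
      simp [hempty]
  have hint : ∫⁻ t in Ioi (0:ℝ), (Ioc (0:ℝ) M).indicator (fun _ => C) t ∂volume ≠ ⊤ := by
    refine ne_top_of_le_ne_top ?_ (lintegral_mono' Measure.restrict_le_self le_rfl)
    rw [lintegral_indicator measurableSet_Ioc, setLIntegral_const]
    exact ENNReal.mul_ne_top hCf (by simp [Real.volume_Ioc])
  have hlim : ∀ᵐ t ∂(volume.restrict (Ioi (0:ℝ))),
      Tendsto (fun n => ν n {x | t < g x}) atTop (𝓝 (μ {x | t < g x})) := by
    have hTnull : (volume : Measure ℝ) {t : ℝ | 0 < μ {x | g x = t}} = 0 :=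
      Tcount.measure_zero volume
    filter_upwards [self_mem_ae_restrict measurableSet_Ioi,
      ae_restrict_of_ae (compl_mem_ae_iff.mpr hTnull)] with t ht hTt
    exact hptwise t ht hTt
  have hconv := tendsto_lintegral_of_dominated_convergence _ hFmeas hbound hint hlim
  have hlayer : ∀ (m : Measure X), IsFiniteMeasure m →
      ∫⁻ x, ENNReal.ofReal (g x) ∂m = ∫⁻ t in Ioi (0:ℝ), m {x | t < g x} := by
    intro m hm
    haveI := hm
    exact lintegral_eq_lintegral_meas_lt m (Eventually.of_forall hg0) hg.aemeasurable
  have hconv2 : Tendsto (fun n => ∫⁻ x, ENNReal.ofReal (g x) ∂ν n) atTop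
      (𝓝 (∫⁻ x, ENNReal.ofReal (g x) ∂μ)) := by
    rw [hlayer μ hμ]
    refine hconv.congr fun n => ?_
    rw [hlayer (ν n) (hν n)]
  have hfinm : ∀ (m : Measure X), IsFiniteMeasure m → ∫⁻ x, ENNReal.ofReal (g x) ∂m ≠ ⊤ := by
    intro m hm
    haveI := hm
    have hle : ∫⁻ x, ENNReal.ofReal (g x) ∂m ≤ ENNReal.ofReal M * m univ := by
      calc ∫⁻ x, ENNReal.ofReal (g x) ∂m ≤ ∫⁻ _, ENNReal.ofReal M ∂m :=
            lintegral_mono fun x => ENNReal.ofReal_le_ofReal (hMg x)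
        _ = ENNReal.ofReal M * m univ := lintegral_const _
    exact ne_top_of_le_ne_top
      (ENNReal.mul_ne_top ENNReal.ofReal_ne_top (measure_ne_top m univ)) hle
  have hreal : Tendsto (fun n => (∫⁻ x, ENNReal.ofReal (g x) ∂ν n).toReal) atTop
      (𝓝 (∫⁻ x, ENNReal.ofReal (g x) ∂μ).toReal) :=
    (ENNReal.tendsto_toReal_iff (fun n => hfinm (ν n) (hν n)) (hfinm μ hμ)).mpr hconv2
  have hint_eq : ∀ (m : Measure X), ∫ x, g x ∂m = (∫⁻ x, ENNReal.ofReal (g x) ∂m).toReal := by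
    intro m
    rw [integral_eq_lintegral_of_nonneg_ae (Eventually.of_forall hg0) hg.aestronglyMeasurable]
  rw [hint_eq μ]
  exact hreal.congr fun n => (hint_eq (ν n)).symm

theorem aux_fwd {X : Type*} [MetricSpace X] [MeasurableSpace X] [BorelSpace X] [ProperSpace X]
    (ν : ℕ → Measure X) (μ : Measure X)
    (hν : ∀ n, IsFiniteMeasure (ν n)) (hμ : IsFiniteMeasure μ)
    (h : ∀ f : X → ℝ, Continuous f → HasCompactSupport f →
        Tendsto (fun n => ∫ x, f x ∂(ν n)) atTop (𝓝 (∫ x, f x ∂μ)))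
    (A : Set X) (hAm : MeasurableSet A) (hAb : IsBounded A) (hAf : μ (frontier A) = 0) :
    Tendsto (fun n => ν n A) atTop (𝓝 (μ A)) := by
  haveI := hμ
  have hclosA : μ (closure A) = μ A := by
    refine le_antisymm ?_ (measure_mono subset_closure)
    have hsub : closure A ⊆ A ∪ frontier A := by
      intro x hx
      by_cases hxA : x ∈ interior A
      · exact Or.inl (interior_subset hxA)
      · exact Or.inr ⟨hx, hxA⟩
    calc μ (closure A) ≤ μ (A ∪ frontier A) := measure_mono hsub
      _ ≤ μ A + μ (frontier A) := measure_union_le _ _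
      _ = μ A := by rw [hAf, add_zero]
  have hintA : μ (interior A) = μ A := by
    refine le_antisymm (measure_mono interior_subset) ?_
    calc μ A ≤ μ (interior A ∪ frontier A) := measure_mono (fun x hx => by
          by_cases hxI : x ∈ interior A
          · exact Or.inl hxI
          · exact Or.inr ⟨subset_closure hx, hxI⟩)
      _ ≤ μ (interior A) + μ (frontier A) := measure_union_le _ _
      _ = μ (interior A) := by rw [hAf, add_zero]
  have hKc : IsCompact (closure A) := hAb.isCompact_closure
  -- integrability and indicator facts for a finite measure
  have hind : ∀ (m : Measure X), IsFiniteMeasure m → ∀ s : Set X, MeasurableSet s →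
      ∫ x, s.indicator (fun _ => (1:ℝ)) x ∂m = (m s).toReal := by
    intro m hm s hs
    haveI := hm
    rw [← measureReal_def]; exact integral_indicator_one (μ := m) hs
  have key : ∀ ε : ℝ, 0 < ε → ∀ᶠ n in atTop, |(ν n A).toReal - (μ A).toReal| < ε := by
    intro ε hε
    -- upper bound via a thickening of the closure
    have hten : Tendsto (fun r => μ (cthickening r (closure A))) (𝓝 0) (𝓝 (μ (closure A))) :=
      tendsto_measure_cthickening_of_isClosed ⟨1, one_pos, measure_ne_top μ _⟩ isClosed_closure
    have hlt : μ (closure A) < μ A + ENNReal.ofReal (ε/2) := by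
      rw [hclosA]
      refine ENNReal.lt_add_right (measure_ne_top μ A) ?_
      simp only [ne_eq, ENNReal.ofReal_eq_zero, not_le]
      linarith
    obtain ⟨r, hrlt, hr0⟩ := (((hten.eventually_lt_const hlt).filter_mono
      (nhdsWithin_le_nhds (s := Ioi (0:ℝ)))).and self_mem_nhdsWithin).exists
    -- Urysohn above
    obtain ⟨fU, hfU1, hfU0, hfUc, hfU01⟩ :=
      exists_continuous_one_zero_of_isCompact hKc (isOpen_thickening.isClosed_compl)
        (Set.disjoint_left.mpr fun x hx hx' => hx' (self_subset_thickening hr0 _ hx))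
    have hUlim : ∫ x, fU x ∂μ ≤ (μ A).toReal + ε/2 := by
      have h1 : ∫ x, fU x ∂μ ≤ ∫ x, (cthickening r (closure A)).indicator (fun _ => (1:ℝ)) x ∂μ := by
        refine integral_mono (fU.continuous.integrable_of_hasCompactSupport hfUc)
          ((integrable_const (1:ℝ)).indicator isClosed_cthickening.measurableSet) fun x => ?_
        by_cases hx : x ∈ cthickening r (closure A)
        · rw [indicator_of_mem hx]
          exact (hfU01 x).2
        · rw [indicator_of_notMem hx]
          have hx' : x ∈ (thickening r (closure A))ᶜ := fun hc =>
            hx (thickening_subset_cthickening _ _ hc)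
          simpa using (hfU0 hx').le
      rw [hind μ hμ _ isClosed_cthickening.measurableSet] at h1
      refine h1.trans ?_
      have := ENNReal.toReal_mono (by finiteness) hrlt.le
      rwa [ENNReal.toReal_add (measure_ne_top μ A) ENNReal.ofReal_ne_top,
        ENNReal.toReal_ofReal (by linarith)] at this
    have hUbound : ∀ n, (ν n A).toReal ≤ ∫ x, fU x ∂ν n := by
      intro n
      haveI := hν n
      rw [← hind (ν n) (hν n) A hAm]
      refine integral_mono ((integrable_const (1:ℝ)).indicator hAm)
        (fU.continuous.integrable_of_hasCompactSupport hfUc) fun x => ?_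
      by_cases hx : x ∈ A
      · rw [indicator_of_mem hx]
        exact (hfU1 (subset_closure hx)).ge
      · rw [indicator_of_notMem hx]
        exact (hfU01 x).1
    have hU : ∀ᶠ n in atTop, (ν n A).toReal < (μ A).toReal + ε := by
      have hUev : ∀ᶠ n in atTop, (∫ x, fU x ∂ν n) < (μ A).toReal + ε :=
        (h fU fU.continuous hfUc).eventually_lt_const (by linarith)
      filter_upwards [hUev] with n hn
      exact lt_of_le_of_lt (hUbound n) hn
    -- lower bound
    have hL : ∀ᶠ n in atTop, (μ A).toReal - ε < (ν n A).toReal := by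
      rcases eq_or_ne (μ (interior A)) 0 with hI0 | hI0
      · have : (μ A).toReal = 0 := by rw [← hintA, hI0, ENNReal.toReal_zero]
        refine Eventually.of_forall fun n => ?_
        rw [this]
        exact lt_of_lt_of_le (by linarith) ENNReal.toReal_nonneg
      · obtain ⟨K', hK'sub, hK'c, hK'lt⟩ :=
          MeasurableSet.exists_lt_isCompact (A := interior A) isOpen_interior.measurableSet
            (ENNReal.sub_lt_self (b := ENNReal.ofReal (ε/2)) (measure_ne_top μ (interior A)) hI0
              (by simp only [ne_eq, ENNReal.ofReal_eq_zero, not_le]; linarith))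
        have hK'real : (μ A).toReal - ε/2 ≤ (μ K').toReal := by
          have h2 : μ (interior A) ≤ μ K' + ENNReal.ofReal (ε/2) :=
            le_trans le_tsub_add (add_le_add hK'lt.le le_rfl)
          have := ENNReal.toReal_mono
            (ENNReal.add_ne_top.mpr ⟨measure_ne_top μ K', ENNReal.ofReal_ne_top⟩) h2
          rw [ENNReal.toReal_add (measure_ne_top μ K') ENNReal.ofReal_ne_top,
            ENNReal.toReal_ofReal (by linarith), hintA] at this
          linarith
        obtain ⟨fL, hfL1, hfL0, hfLc, hfL01⟩ :=
          exists_continuous_one_zero_of_isCompact hK'c (isOpen_interior.isClosed_compl)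
            (Set.disjoint_left.mpr fun x hx hx' => hx' (hK'sub hx))
        have hLlim : (μ A).toReal - ε/2 ≤ ∫ x, fL x ∂μ := by
          have h1 : ∫ x, K'.indicator (fun _ => (1:ℝ)) x ∂μ ≤ ∫ x, fL x ∂μ := by
            refine integral_mono ((integrable_const (1:ℝ)).indicator hK'c.measurableSet)
              (fL.continuous.integrable_of_hasCompactSupport hfLc) fun x => ?_
            by_cases hx : x ∈ K'
            · rw [indicator_of_mem hx]
              exact (hfL1 hx).ge
            · rw [indicator_of_notMem hx]
              exact (hfL01 x).1
          rw [hind μ hμ _ hK'c.measurableSet] at h1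
          linarith [hK'real]
        have hLbound : ∀ n, ∫ x, fL x ∂ν n ≤ (ν n A).toReal := by
          intro n
          haveI := hν n
          rw [← hind (ν n) (hν n) A hAm]
          refine integral_mono (fL.continuous.integrable_of_hasCompactSupport hfLc)
            ((integrable_const (1:ℝ)).indicator hAm) fun x => ?_
          by_cases hx : x ∈ A
          · rw [indicator_of_mem hx]
            exact (hfL01 x).2
          · rw [indicator_of_notMem hx]
            have hx' : x ∈ (interior A)ᶜ := fun hc => hx (interior_subset hc)
            simpa using (hfL0 hx').le
        have hLev : ∀ᶠ n in atTop, (μ A).toReal - ε < ∫ x, fL x ∂ν n :=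
          (h fL fL.continuous hfLc).eventually_const_lt (by linarith)
        filter_upwards [hLev] with n hn
        exact lt_of_lt_of_le hn (hLbound n)
    filter_upwards [hU, hL] with n h1 h2
    rw [abs_sub_lt_iff]
    constructor <;> linarith
  have hreal : Tendsto (fun n => (ν n A).toReal) atTop (𝓝 (μ A).toReal) := by
    refine Metric.tendsto_atTop.mpr fun ε hε => ?_
    obtain ⟨N, hN⟩ := eventually_atTop.1 (key ε hε)
    exact ⟨N, fun n hn => by simpa [Real.dist_eq] using hN n hn⟩
  exact (ENNReal.tendsto_toReal_iff (fun n => by haveI := hν n; exact measure_ne_top (ν n) A)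
    (measure_ne_top μ A)).mp hreal

/-- Vague convergence on a separable complete Heine-Borel metric space is equivalent to
convergence on bounded continuity sets. -/
theorem stmt2 {X : Type*} [MetricSpace X] [TopologicalSpace.SeparableSpace X] [CompleteSpace X]
    [MeasurableSpace X] [BorelSpace X]
    (hHB : ∀ s : Set X, IsClosed s → Bornology.IsBounded s → IsCompact s)
    (ν : ℕ → Measure X) (μ : Measure X)
    (hν : ∀ n, IsFiniteMeasure (ν n)) (hμ : IsFiniteMeasure μ) :
    (∀ f : X → ℝ, Continuous f → HasCompactSupport f →
        Tendsto (fun n => ∫ x, f x ∂(ν n)) atTop (𝓝 (∫ x, f x ∂μ)))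
      ↔
    (∀ A : Set X, MeasurableSet A → Bornology.IsBounded A → μ (frontier A) = 0 →
        Tendsto (fun n => ν n A) atTop (𝓝 (μ A))) := by
  haveI hP : ProperSpace X :=
    ⟨fun x r => hHB _ Metric.isClosed_closedBall Metric.isBounded_closedBall⟩
  constructor
  · intro hpt A hAm hAb hAf
    exact aux_fwd ν μ hν hμ hpt A hAm hAb hAf
  · intro hA f hf hfc
    have hplus : Continuous (fun x => max (f x) 0) := hf.max continuous_const
    have hminus : Continuous (fun x => max (-f x) 0) := hf.neg.max continuous_const
    have hplusc : HasCompactSupport (fun x => max (f x) 0) := by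
      refine IsCompact.of_isClosed_subset hfc (isClosed_tsupport _) (closure_mono ?_)
      intro x hx
      simp only [Function.mem_support, ne_eq] at hx ⊢
      intro h0
      exact hx (by simp [h0])
    have hminusc : HasCompactSupport (fun x => max (-f x) 0) := by
      refine IsCompact.of_isClosed_subset hfc (isClosed_tsupport _) (closure_mono ?_)
      intro x hx
      simp only [Function.mem_support, ne_eq] at hx ⊢
      intro h0
      exact hx (by simp [h0])
    have h1 := aux_rev ν μ hν hμ hA _ hplus hplusc (fun x => le_max_right _ _)
    have h2 := aux_rev ν μ hν hμ hA _ hminus hminusc (fun x => le_max_right _ _)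
    have hint : ∀ (m : Measure X), IsFiniteMeasure m →
        ∫ x, f x ∂m = (∫ x, max (f x) 0 ∂m) - ∫ x, max (-f x) 0 ∂m := by
      intro m hm
      haveI := hm
      rw [← integral_sub (hplus.integrable_of_hasCompactSupport hplusc)
        (hminus.integrable_of_hasCompactSupport hminusc)]
      exact integral_congr_ae (Eventually.of_forall fun x =>
        (max_zero_sub_max_neg_zero_eq_self (f x)).symm)
    rw [hint μ hμ]
    exact (h1.sub h2).congr fun n => (hint (ν n) (hν n)).symm
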